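/- In a solvable SRI instance with all preference lists of length at most 4, any stable matching M satisfies c(M) ≤ (5/3) · c(M_egal), where M_egal is an egalitarian stable matching and c is the sum of ranks of matched agents, assuming the instance has no (1,1)-pairs and no (4,4)-pairs. -/

import Mathlib

/-- An instance of the Stable Roommates problem with Incomplete (strict) lists:
a graph together with a rank function, where `rank u v` is one plus the number
of neighbours of `u` that `u` strictly prefers to `v`, and ranks of distinct
neighbours are distinct (strict preferences). -/
structure SRI (V : Type*) [Fintype V] where
  G : SimpleGraph V
  rank : V → V → ℕ
  rank_eq : ∀ u v, G.Adj u v →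
    rank u v = 1 + Set.ncard {w | G.Adj u w ∧ rank u w < rank u v}
  rank_inj : ∀ u v w, G.Adj u v → G.Adj u w → rank u v = rank u w → v = w

variable {V : Type*} [Fintype V]

/-- A matching: a symmetric partial pairing along edges of the graph. -/
structure SRI.Matching (I : SRI V) where
  M : V → Option V
  symm : ∀ u v, M u = some v → M v = some u
  adj : ∀ u v, M u = some v → I.G.Adj u v

/-- Edge `uv` blocks `N`. -/
def SRI.Blocks (I : SRI V) (N : I.Matching) (u v : V) : Prop :=
  I.G.Adj u v ∧ N.M u ≠ some v ∧
  (N.M u = none ∨ ∃ w, N.M u = some w ∧ I.rank u v < I.rank u w) ∧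
  (N.M v = none ∨ ∃ w, N.M v = some w ∧ I.rank v u < I.rank v w)

def SRI.Stable (I : SRI V) (N : I.Matching) : Prop := ∀ u v, ¬ I.Blocks N u v

/-- Cost of a matching: the sum of `rank a (M a)` over matched agents `a`. -/
def SRI.cost (I : SRI V) (N : I.Matching) : ℕ :=
  ∑ v : V, (N.M v).elim 0 (I.rank v)

/-- Every preference list has length at most `d`. -/
def SRI.MaxDeg (I : SRI V) (d : ℕ) : Prop := ∀ v, Set.ncard {w | I.G.Adj v w} ≤ d

/-- An egalitarian stable matching minimises cost among stable matchings. -/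
def SRI.Egalitarian (I : SRI V) (N : I.Matching) : Prop :=
  I.Stable N ∧ ∀ N' : I.Matching, I.Stable N' → I.cost N ≤ I.cost N'

lemma rank_pos' (I : SRI V) {u v : V} (h : I.G.Adj u v) : 1 ≤ I.rank u v := by
  rw [I.rank_eq u v h]; omega

lemma rank_le_four' (I : SRI V) (h4 : ∀ v, Set.ncard {w | I.G.Adj v w} ≤ 4)
    {u v : V} (h : I.G.Adj u v) : I.rank u v ≤ 4 := by
  have hsub : {w | I.G.Adj u w ∧ I.rank u w < I.rank u v} ⊆ {w | I.G.Adj u w} \ {v} := by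
    rintro w ⟨hw, hlt⟩
    refine ⟨hw, ?_⟩
    rintro rfl
    exact lt_irrefl _ hlt
  have hfin : ({w | I.G.Adj u w} : Set V).Finite := Set.toFinite _
  have h1 : Set.ncard {w | I.G.Adj u w ∧ I.rank u w < I.rank u v}
      ≤ Set.ncard ({w | I.G.Adj u w} \ {v}) := Set.ncard_le_ncard hsub hfin.diff
  have h2 : Set.ncard ({w | I.G.Adj u w} \ {v}) < Set.ncard {w | I.G.Adj u w} :=
    Set.ncard_diff_singleton_lt_of_mem (show v ∈ {w | I.G.Adj u w} from h) hfin
  have h3 := h4 u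
  rw [I.rank_eq u v h]; omega

lemma rank_lt' (I : SRI V) {u v w : V} (hv : I.G.Adj u v) (hw : I.G.Adj u w)
    (hne : v ≠ w) (hle : I.rank u v ≤ I.rank u w) : I.rank u v < I.rank u w :=
  lt_of_le_of_ne hle (fun h => hne (I.rank_inj u v w hv hw h))

lemma step' (I : SRI V) (Q : I.Matching) (hQ : I.Stable Q) {u v : V}
    (hadj : I.G.Adj u v) (hnotin : Q.M u ≠ some v)
    (hC : Q.M u = none ∨ ∃ p, Q.M u = some p ∧ I.rank u v < I.rank u p) :
    ∃ q, Q.M v = some q ∧ I.rank v q < I.rank v u := by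
  have hb := hQ u v
  rw [SRI.Blocks] at hb
  push_neg at hb
  have hCv := hb hadj hnotin hC
  obtain ⟨hvn, hle⟩ := hCv
  obtain ⟨q, hq⟩ := Option.ne_none_iff_exists'.mp hvn
  refine ⟨q, hq, ?_⟩
  have hqu : q ≠ u := by
    rintro rfl
    exact hnotin (Q.symm v q hq)
  exact rank_lt' I (Q.adj v q hq) hadj.symm hqu (hle q hq)

private def lwMat (I : SRI V) (M1 M2 : I.Matching) : ℕ → I.Matching :=
  fun n => if n % 2 = 0 then M1 else M2

private def lwx (I : SRI V) (M1 M2 : I.Matching) (a : V) : ℕ → V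
  | 0 => a
  | n+1 => ((lwMat I M1 M2 n).M (lwx I M1 M2 a n)).getD (lwx I M1 M2 a n)

lemma lone_wolf' (I : SRI V) (M1 M2 : I.Matching) (h1 : I.Stable M1) (h2 : I.Stable M2)
    {a b : V} (hab : M1.M a = some b) (ha : M2.M a = none) : False := by
  classical
  set Mat := lwMat I M1 M2 with hMatdef
  set x := lwx I M1 M2 a with hxdef
  have hx0 : x 0 = a := rfl
  have hxs : ∀ n, x (n + 1) = ((Mat n).M (x n)).getD (x n) := fun n => rfl
  have hMat0 : ∀ n, n % 2 = 0 → Mat n = M1 := by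
    intro n h; simp [hMatdef, lwMat, h]
  have hMat1 : ∀ n, n % 2 = 1 → Mat n = M2 := by
    intro n h; simp [hMatdef, lwMat, h]
  have hMat2 : ∀ n, Mat (n + 2) = Mat n := by
    intro n; simp [hMatdef, lwMat, Nat.add_mod]
  have hMatS : ∀ n, I.Stable (Mat n) := by
    intro n
    rw [hMatdef]; unfold lwMat
    split
    · exact h1
    · exact h2
  have hD : ∀ n, (Mat n).M (x n) = some (x (n+1)) ∧
      (Mat (n+1)).M (x (n+1)) = some (x (n+2)) ∧
      I.rank (x (n+1)) (x (n+2)) < I.rank (x (n+1)) (x n) := by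
    intro n
    induction n with
    | zero =>
      have e1 : x 1 = b := by rw [hxs 0, hx0, hMat0 0 rfl, hab]; rfl
      have h01 : (Mat 0).M (x 0) = some (x 1) := by rw [hMat0 0 rfl, hx0, e1, hab]
      have hadj : I.G.Adj a b := M1.adj a b hab
      have hne : M2.M a ≠ some b := by rw [ha]; simp
      obtain ⟨q, hq, hlt⟩ := step' I M2 h2 hadj hne (Or.inl ha)
      have e2 : x 2 = q := by rw [hxs 1, e1, hMat1 1 rfl, hq]; rfl
      refine ⟨h01, ?_, ?_⟩
      · rw [hMat1 1 rfl, e1, e2]; exact hq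
      · rw [e1, e2, hx0]; exact hlt
    | succ n ih =>
      obtain ⟨i1, i2, i3⟩ := ih
      have hQu : (Mat (n+2)).M (x (n+1)) = some (x n) := by
        rw [hMat2 n]; exact (Mat n).symm _ _ i1
      have hne2 : x n ≠ x (n+2) := by
        intro h; rw [h] at i3; exact lt_irrefl _ i3
      have hnotin : (Mat (n+2)).M (x (n+1)) ≠ some (x (n+2)) := by
        rw [hQu]; intro h; exact hne2 (Option.some.inj h)
      have hadj : I.G.Adj (x (n+1)) (x (n+2)) := (Mat (n+1)).adj _ _ i2
      obtain ⟨q, hq, hlt⟩ := step' I (Mat (n+2)) (hMatS (n+2)) hadj hnotin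
        (Or.inr ⟨x n, hQu, i3⟩)
      have e3 : x (n+3) = q := by rw [hxs (n+2), hq]; rfl
      exact ⟨i2, by rw [e3]; exact hq, by rw [e3]; exact hlt⟩
  have hinj : ∀ i j, x i = x j → i % 2 = j % 2 → i = j := by
    intro i
    induction i with
    | zero =>
      intro j hx hp
      cases j with
      | zero => rfl
      | succ j =>
        exfalso
        have hj : j % 2 = 1 := by omega
        have e := (Mat j).symm _ _ (hD j).1
        rw [← hx, hx0, hMat1 j hj] at e
        rw [ha] at e
        exact Option.some_ne_none _ e.symm
    | succ i ih =>
      intro j hx hp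
      cases j with
      | zero =>
        exfalso
        have hi : i % 2 = 1 := by omega
        have e := (Mat i).symm _ _ (hD i).1
        rw [hx, hx0, hMat1 i hi] at e
        rw [ha] at e
        exact Option.some_ne_none _ e.symm
      | succ j =>
        have hp' : i % 2 = j % 2 := by omega
        have hMeq : Mat i = Mat j := by
          rw [hMatdef]; unfold lwMat; rw [hp']
        have e1 : (Mat i).M (x (i+1)) = some (x i) := (Mat i).symm _ _ (hD i).1
        have e2 : (Mat j).M (x (j+1)) = some (x j) := (Mat j).symm _ _ (hD j).1
        rw [← hMeq, ← hx, e1] at e2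
        have hxij : x i = x j := Option.some.inj e2
        have := ih j hxij hp'
        omega
  obtain ⟨i, j, hne, heq⟩ := Finite.exists_ne_map_eq_of_infinite
    (fun n : ℕ => ((x n, decide (n % 2 = 0)) : V × Bool))
  have hx : x i = x j := congrArg Prod.fst heq
  have hb' : decide (i % 2 = 0) = decide (j % 2 = 0) := congrArg Prod.snd heq
  have hp : i % 2 = j % 2 := by
    have hiff : i % 2 = 0 ↔ j % 2 = 0 := decide_eq_decide.mp hb'
    omega
  exact hne (hinj i j hx hp)


/-- In a solvable 4-SRI instance without (1,1)- and (4,4)-pairs,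
any stable matching satisfies `c(M) ≤ (5/3) c(M_egal)`. -/
theorem stmt5 (I : SRI V) (h4 : I.MaxDeg 4)
    (h11 : ∀ u v, I.G.Adj u v → ¬ (I.rank u v = 1 ∧ I.rank v u = 1))
    (h44 : ∀ u v, I.G.Adj u v → ¬ (I.rank u v = 4 ∧ I.rank v u = 4))
    (N Ne : I.Matching) (hN : I.Stable N) (hNe : I.Egalitarian Ne) :
    3 * I.cost N ≤ 5 * I.cost Ne := by
  classical
  have hNeS : I.Stable Ne := hNe.1
  set ι : V → V := fun v => (Ne.M v).getD v with hι
  have hinv : Function.Involutive ι := by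
    intro v
    cases hv : Ne.M v with
    | none => simp [hι, hv]
    | some w =>
      have hw := Ne.symm v w hv
      simp [hι, hv, hw]
  have key : ∀ v, 3 * ((N.M v).elim 0 (I.rank v)) + 3 * ((N.M (ι v)).elim 0 (I.rank (ι v)))
      ≤ 5 * ((Ne.M v).elim 0 (I.rank v)) + 5 * ((Ne.M (ι v)).elim 0 (I.rank (ι v))) := by
    intro v
    cases hv : Ne.M v with
    | none =>
      have hrv : N.M v = none := by
        cases hn : N.M v with
        | none => rfl
        | some b => exact (lone_wolf' I N Ne hN hNeS hn hv).elim
      simp [hι, hv, hrv]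
    | some w =>
      have hwv : Ne.M w = some v := Ne.symm v w hv
      have hιv : ι v = w := by simp [hι, hv]
      rw [hιv, hwv]
      have hadj : I.G.Adj v w := Ne.adj v w hv
      by_cases hsame : N.M v = some w
      · have h2 : N.M w = some v := N.symm v w hsame
        rw [hsame, h2]
        simp only [Option.elim_some]
        omega
      · obtain ⟨p, hp⟩ : ∃ p, N.M v = some p := by
          cases hn : N.M v with
          | none => exact (lone_wolf' I Ne N hNeS hN hv hn).elim
          | some p => exact ⟨p, rfl⟩
        obtain ⟨q, hq⟩ : ∃ q, N.M w = some q := by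
          cases hn : N.M w with
          | none => exact (lone_wolf' I Ne N hNeS hN hwv hn).elim
          | some q => exact ⟨q, rfl⟩
        rw [hp, hq]
        simp only [Option.elim_some]
        have hpv : I.G.Adj v p := N.adj v p hp
        have hqw : I.G.Adj w q := N.adj w q hq
        have b1 : 1 ≤ I.rank v p := rank_pos' I hpv
        have b2 : I.rank v p ≤ 4 := rank_le_four' I h4 hpv
        have b3 : 1 ≤ I.rank w q := rank_pos' I hqw
        have b4 : I.rank w q ≤ 4 := rank_le_four' I h4 hqw
        have b5 : 1 ≤ I.rank v w := rank_pos' I hadj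
        have b6 : 1 ≤ I.rank w v := rank_pos' I hadj.symm
        have hblock := hN v w
        rw [SRI.Blocks] at hblock
        push_neg at hblock
        by_cases hcase : I.rank v w < I.rank v p
        · obtain ⟨-, hle⟩ := hblock hadj hsame (Or.inr ⟨p, hp, hcase⟩)
          have hle' : I.rank w q ≤ I.rank w v := hle q hq
          have hqv : q ≠ v := fun h => hsame (N.symm w v (h ▸ hq))
          have hstrict : I.rank w q < I.rank w v := rank_lt' I hqw hadj.symm hqv hle'
          omega
        · have hpw : p ≠ w := fun h => hsame (h ▸ hp)
          have hle' : I.rank v p ≤ I.rank v w := le_of_not_gt hcase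
          have hstrict : I.rank v p < I.rank v w := rank_lt' I hpv hadj hpw hle'
          omega
  have hsum := Finset.sum_le_sum (fun v (_ : v ∈ Finset.univ) => key v)
  have hcomp1 : ∑ v : V, (N.M (ι v)).elim 0 (I.rank (ι v))
      = ∑ v : V, (N.M v).elim 0 (I.rank v) :=
    Equiv.sum_comp hinv.toPerm (fun v => (N.M v).elim 0 (I.rank v))
  have hcomp2 : ∑ v : V, (Ne.M (ι v)).elim 0 (I.rank (ι v))
      = ∑ v : V, (Ne.M v).elim 0 (I.rank v) :=
    Equiv.sum_comp hinv.toPerm (fun v => (Ne.M v).elim 0 (I.rank v))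
  rw [Finset.sum_add_distrib, Finset.sum_add_distrib, ← Finset.mul_sum, ← Finset.mul_sum,
    ← Finset.mul_sum, ← Finset.mul_sum, hcomp1, hcomp2] at hsum
  have e1 : I.cost N = ∑ v : V, (N.M v).elim 0 (I.rank v) := rfl
  have e2 : I.cost Ne = ∑ v : V, (Ne.M v).elim 0 (I.rank v) := rfl
  rw [e1, e2]
  omega
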